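/- Consider a rooted complete tree of height D in which every non-leaf node has exactly b ≥ 1 children, and a broadcast process in discrete time slots where initially only the root holds a message, and in each time slot each node holding the message may transmit it to at most one of its children (messages cannot travel between siblings or skip levels). Then at least D·b time slots are required before all nodes at depth D hold the message. -/
import Mathlib


/-- Broadcast lower bound on a complete tree. Nodes of the complete `b`-ary tree are
represented as lists over `Fin b` (the root is `[]`, and the children of `l` are the
nodes `l ++ [i]`); nodes at depth `d` are the lists of length `d`. `informed t` is the
set of nodes holding the message at the start of slot `t`. Initially only the root is
informed; informed nodes stay informed; a node can only become informed if its parent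
was informed in the previous slot; and in each slot each node transmits to at most one
of its children. If all nodes at depth `D` are informed at time `T`, then `D·b ≤ T`. -/
theorem stmt_13 (b D T : ℕ) (hb : 1 ≤ b)
    (informed : ℕ → Set (List (Fin b)))
    (h0 : informed 0 = {[]})
    (hmono : ∀ t, informed t ⊆ informed (t + 1))
    (hparent : ∀ t (l : List (Fin b)) (i : Fin b),
      l ++ [i] ∈ informed (t + 1) → l ++ [i] ∉ informed t → l ∈ informed t)
    (hone : ∀ t (l : List (Fin b)),
      {i : Fin b | l ++ [i] ∈ informed (t + 1) ∧ l ++ [i] ∉ informed t}.Subsingleton)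
    (hall : ∀ l : List (Fin b), l.length = D → l ∈ informed T) :
    D * b ≤ T := by
  have key : ∀ d : ℕ, ∃ l : List (Fin b), l.length = d ∧ ∀ t, t < d * b → l ∉ informed t := by
    intro d
    classical
    induction d with
    | zero => exact ⟨[], rfl, fun t ht => absurd ht (by simp)⟩
    | succ d ih =>
      obtain ⟨l, hlen, hl⟩ := ih
      by_contra hcon
      push_neg at hcon
      have hex : ∀ i : Fin b, ∃ t, l ++ [i] ∈ informed t := by
        intro i
        obtain ⟨t, _, hmem⟩ := hcon (l ++ [i]) (by simp [hlen])
        exact ⟨t, hmem⟩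
      set f : Fin b → ℕ := fun i => Nat.find (hex i) with hf
      have hspec : ∀ i, l ++ [i] ∈ informed (f i) := fun i => Nat.find_spec (hex i)
      have hmin : ∀ i t, t < f i → l ++ [i] ∉ informed t := fun i t ht => Nat.find_min (hex i) ht
      have hpos : ∀ i, f i ≠ 0 := by
        intro i h
        have := hspec i
        rw [h, h0] at this
        simp at this
      have hlb : ∀ i, d * b + 1 ≤ f i := by
        intro i
        obtain ⟨s, hs⟩ := Nat.exists_eq_succ_of_ne_zero (hpos i)
        have h1 : l ++ [i] ∈ informed (s + 1) := by
          have := hspec i; rw [hs] at this; exact this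
        have h2 : l ++ [i] ∉ informed s := hmin i s (by omega)
        have h3 : l ∈ informed s := hparent s l i h1 h2
        have : ¬ s < d * b := fun h => hl s h h3
        omega
      have hub : ∀ i, f i < (d + 1) * b := by
        intro i
        obtain ⟨t, htlt, hmem⟩ := hcon (l ++ [i]) (by simp [hlen])
        have h2 : f i ≤ t := Nat.find_min' (hex i) hmem
        omega
      have hinj : Function.Injective f := by
        intro i j hij
        obtain ⟨s, hs⟩ := Nat.exists_eq_succ_of_ne_zero (hpos i)
        have hi : l ++ [i] ∈ informed (s + 1) ∧ l ++ [i] ∉ informed s :=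
          ⟨by have := hspec i; rw [hs] at this; exact this, hmin i s (by omega)⟩
        have hs' : f j = s + 1 := by rw [← hij]; exact hs
        have hj : l ++ [j] ∈ informed (s + 1) ∧ l ++ [j] ∉ informed s :=
          ⟨by have := hspec j; rw [hs'] at this; exact this, hmin j s (by omega)⟩
        exact hone s l hi hj
      have hmaps : ∀ i : Fin b, f i ∈ Finset.Ico (d * b + 1) ((d + 1) * b) := by
        intro i
        simp [Finset.mem_Ico, hlb i, hub i]
      have hcard := Finset.card_le_card_of_injOn (s := Finset.univ)
        (t := Finset.Ico (d * b + 1) ((d + 1) * b)) f (fun i _ => hmaps i)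
        (fun i _ j _ h => hinj h)
      simp [Nat.card_Ico] at hcard
      have hx : (d + 1) * b = d * b + b := by ring
      omega
  obtain ⟨l, hlen, hl⟩ := key D
  by_contra h
  exact hl T (by omega) (hall l hlen)
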